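/- Suppose ‖x‖ > Δ. Then for every ζ with νλ < ζ < νλ + ‖x‖ − Δ, one has g(ζ) < 0. -/
import Mathlib


/-- If ‖x‖ > Δ, then g(ζ) < 0 for νλ < ζ < νλ + ‖x‖ − Δ. -/
theorem g_neg_for_small_zeta {H : Type*}
    [NormedAddCommGroup H] [InnerProductSpace ℝ H] [FiniteDimensional ℝ H]
    (ν lam Δ : ℝ) (hν : 0 < ν) (hlam : 0 < lam) (hΔ : 0 < Δ)
    (x qbar : H) (hx : Δ < ‖x‖)
    (projC : H → H)
    (hmem : ∀ u, projC u ∈ Metric.closedBall (0 : H) Δ)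
    (hnear : ∀ u, ∀ v ∈ Metric.closedBall (0 : H) Δ, ‖u - projC u‖ ≤ ‖u - v‖)
    (w : ℝ → H) (g : ℝ → ℝ)
    (hw : ∀ ζ, w ζ = (ζ / (ζ - ν * lam)) • (x + projC (((ζ - ν * lam) / ζ) • qbar - x)))
    (hg : ∀ ζ, g ζ = ζ - ‖w ζ‖) :
    ∀ ζ, ν * lam < ζ → ζ < ν * lam + ‖x‖ - Δ → g ζ < 0 := by
  intro ζ h1 h2
  have hd : (0:ℝ) < ζ - ν * lam := by linarith
  have hζ : (0:ℝ) < ζ := by nlinarith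
  set p := projC (((ζ - ν * lam) / ζ) • qbar - x) with hp
  have hpΔ : ‖p‖ ≤ Δ := by
    have := hmem (((ζ - ν * lam) / ζ) • qbar - x)
    simpa [Metric.mem_closedBall, dist_eq_norm] using this
  have hxp : ‖x‖ - Δ ≤ ‖x + p‖ := by
    have : ‖x‖ ≤ ‖x + p‖ + ‖p‖ := by
      calc ‖x‖ = ‖(x + p) - p‖ := by rw [add_sub_cancel_right]
        _ ≤ ‖x + p‖ + ‖p‖ := norm_sub_le _ _
    linarith
  have hc : (0:ℝ) < ζ / (ζ - ν * lam) := div_pos hζ hd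
  have hwn : ‖w ζ‖ = (ζ / (ζ - ν * lam)) * ‖x + p‖ := by
    rw [hw ζ, norm_smul, Real.norm_eq_abs, abs_of_pos hc]
  have hcd : (ζ / (ζ - ν * lam)) * (ζ - ν * lam) = ζ := div_mul_cancel₀ _ (ne_of_gt hd)
  have key : ζ < ‖w ζ‖ := by
    rw [hwn]
    calc ζ = (ζ / (ζ - ν * lam)) * (ζ - ν * lam) := hcd.symm
      _ < (ζ / (ζ - ν * lam)) * (‖x‖ - Δ) := by
          apply mul_lt_mul_of_pos_left _ hc; linarith
      _ ≤ (ζ / (ζ - ν * lam)) * ‖x + p‖ := by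
          apply mul_le_mul_of_nonneg_left hxp (le_of_lt hc)
  rw [hg ζ]; linarith
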